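/- Let U and W be arbitrary (n−1)-dimensional K-subspaces of F. Then there exists a ∈ F^* such that W = aU = {au : u ∈ U}. -/

import Mathlib

lemma exists_ker_eq (K F : Type*) [Field K] [Field F] [Algebra K F]
    [FiniteDimensional K F]
    (n : ℕ) (hn : Module.finrank K F = n) (hnpos : 0 < n)
    (U : Submodule K F) (hU : Module.finrank K U = n - 1) :
    ∃ φ : Module.Dual K F, φ ≠ 0 ∧ LinearMap.ker φ = U := by
  have hq : Module.finrank K (F ⧸ U) = 1 := by
    have := Submodule.finrank_quotient_add_finrank U
    omega
  have hk : Module.finrank K K = 1 := Module.finrank_self K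
  obtain ⟨e⟩ := FiniteDimensional.nonempty_linearEquiv_of_finrank_eq (hq.trans hk.symm)
  refine ⟨e.toLinearMap.comp U.mkQ, ?_, ?_⟩
  · intro h
    have h1 : Module.finrank K (F ⧸ U) = 0 := by
      have : Function.Injective (e.toLinearMap) := e.injective
      have hz : ∀ x : F ⧸ U, x = 0 := by
        intro x
        obtain ⟨y, rfl⟩ := U.mkQ_surjective x
        have h0 := congrFun (congrArg DFunLike.coe h) y
        exact e.map_eq_zero_iff.mp h0
      have : Subsingleton (F ⧸ U) := ⟨fun a b => by rw [hz a, hz b]⟩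
      exact Module.finrank_zero_of_subsingleton
    omega
  · ext x
    simp [LinearMap.mem_ker, e.map_eq_zero_iff, Submodule.Quotient.mk_eq_zero]

/-- For arbitrary `(n-1)`-dimensional `K`-subspaces `U` and `W` of `F` (where
`F/K` is a degree-`n` extension of finite fields), there exists `a ∈ F^*` such that
`W = aU = {au : u ∈ U}`. -/
theorem hyperplanes_are_multiples
    (K F : Type*) [Field K] [Fintype K] [Field F] [Algebra K F]
    (n : ℕ) (hn : Module.finrank K F = n) (hnpos : 0 < n)
    (U W : Submodule K F)
    (hU : Module.finrank K U = n - 1) (hW : Module.finrank K W = n - 1) :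
    ∃ a : F, a ≠ 0 ∧ (W : Set F) = (fun u => a * u) '' (U : Set F) := by
  have : FiniteDimensional K F := Module.finite_of_finrank_pos (hn ▸ hnpos)
  have : Algebra.IsSeparable K F := Algebra.IsAlgebraic.isSeparable_of_perfectField
  obtain ⟨φ, hφ, hφU⟩ := exists_ker_eq K F n hn hnpos U hU
  obtain ⟨ψ, hψ, hψW⟩ := exists_ker_eq K F n hn hnpos W hW
  set T := (Algebra.traceForm K F).toDual (traceForm_nondegenerate K F)
  obtain ⟨α, hα⟩ := T.surjective φ
  obtain ⟨β, hβ⟩ := T.surjective ψ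
  have hα0 : α ≠ 0 := by rintro rfl; exact hφ (by simpa using hα.symm)
  have hβ0 : β ≠ 0 := by rintro rfl; exact hψ (by simpa using hβ.symm)
  have hφ' : ∀ x, φ x = Algebra.trace K F (α * x) := fun x => by
    rw [← hα]; rfl
  have hψ' : ∀ x, ψ x = Algebra.trace K F (β * x) := fun x => by
    rw [← hβ]; rfl
  refine ⟨α * β⁻¹, mul_ne_zero hα0 (inv_ne_zero hβ0), ?_⟩
  ext w
  simp only [SetLike.mem_coe, Set.mem_image]
  constructor
  · intro hw
    refine ⟨α⁻¹ * β * w, ?_, by field_simp⟩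
    rw [← hφU, LinearMap.mem_ker, hφ']
    have : β * w = α * (α⁻¹ * β * w) := by field_simp
    rw [← this, ← hψ', ← LinearMap.mem_ker, hψW]
    exact hw
  · rintro ⟨u, hu, rfl⟩
    rw [← hψW, LinearMap.mem_ker, hψ']
    have : β * (α * β⁻¹ * u) = α * u := by field_simp
    rw [this, ← hφ', ← LinearMap.mem_ker, hφU]
    exact hu
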